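/- Let α ∈ ℂ, let U ⊆ ℂ be open, and let u : ℂ → ℂ be four times complex differentiable on U and satisfy u''''(t) = −5 u'(t) u''(t) + 5 u(t)² u''(t) + 5 u(t) (u'(t))² − u(t)⁵ + t·u(t) + α for all t ∈ U. Then the functions q₁ := −u, p₁ := −(u''' − (1/2)u⁴ − u² u' + (3/2)(u')² + 2 u u'' + t/2), q₂ := −(u'' + 2 u u'), p₂ := −(u' + u²) are differentiable on U and satisfy the Hamiltonian system q₁' = q₁² + p₂, p₁' = −2 q₁ p₁ − α − 1/2, q₂' = −(1/2) p₂² + p₁ + t/2, p₂' = q₂ on U. -/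

import Mathlib

/-- The birational transformation (2),
`q₁ = -u`, `p₁ = -(u''' - u⁴/2 - u² u' + (3/2)(u')² + 2 u u'' + t/2)`,
`q₂ = -(u'' + 2 u u')`, `p₂ = -(u' + u²)`,
takes any solution of the fourth-order equation (1),
`u'''' = -5 u' u'' + 5 u² u'' + 5 u (u')² - u⁵ + t u + α`,
to a solution of the Hamiltonian system (3):
`q₁' = q₁² + p₂`, `p₁' = -2 q₁ p₁ - α - 1/2`, `q₂' = -(1/2) p₂² + p₁ + t/2`, `p₂' = q₂`. -/
theorem stmt0 (α : ℂ) (U : Set ℂ) (hU : IsOpen U) (u : ℂ → ℂ)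
    (h1 : ∀ t ∈ U, HasDerivAt u (deriv u t) t)
    (h2 : ∀ t ∈ U, HasDerivAt (deriv u) (deriv (deriv u) t) t)
    (h3 : ∀ t ∈ U, HasDerivAt (deriv (deriv u)) (deriv (deriv (deriv u)) t) t)
    (h4 : ∀ t ∈ U, HasDerivAt (deriv (deriv (deriv u)))
      (deriv (deriv (deriv (deriv u))) t) t)
    (hode : ∀ t ∈ U, deriv (deriv (deriv (deriv u))) t =
      -5 * deriv u t * deriv (deriv u) t + 5 * (u t) ^ 2 * deriv (deriv u) t
        + 5 * u t * (deriv u t) ^ 2 - (u t) ^ 5 + t * u t + α) :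
    ∀ t ∈ U,
      (HasDerivAt (fun s => -u s)
        ((-u t) ^ 2 + -(deriv u t + (u t) ^ 2)) t) ∧
      (HasDerivAt (fun s => -(deriv (deriv (deriv u)) s - (1/2) * (u s) ^ 4
            - (u s) ^ 2 * deriv u s + (3/2) * (deriv u s) ^ 2
            + 2 * u s * deriv (deriv u) s + s / 2))
        (-2 * (-u t) * (-(deriv (deriv (deriv u)) t - (1/2) * (u t) ^ 4
            - (u t) ^ 2 * deriv u t + (3/2) * (deriv u t) ^ 2
            + 2 * u t * deriv (deriv u) t + t / 2)) - α - 1/2) t) ∧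
      (HasDerivAt (fun s => -(deriv (deriv u) s + 2 * u s * deriv u s))
        (-(1/2) * (-(deriv u t + (u t) ^ 2)) ^ 2
          + (-(deriv (deriv (deriv u)) t - (1/2) * (u t) ^ 4
            - (u t) ^ 2 * deriv u t + (3/2) * (deriv u t) ^ 2
            + 2 * u t * deriv (deriv u) t + t / 2)) + t / 2) t) ∧
      (HasDerivAt (fun s => -(deriv u s + (u s) ^ 2))
        (-(deriv (deriv u) t + 2 * u t * deriv u t)) t) := by
  intro t ht
  have H1 := h1 t ht
  have H2 := h2 t ht
  have H3 := h3 t ht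
  have H4 := h4 t ht
  have A := (H1.pow 4).const_mul (1/2 : ℂ)
  have B := (H1.pow 2).mul H2
  have C := (H2.pow 2).const_mul (3/2 : ℂ)
  have D := (H1.const_mul 2).mul H3
  have E := (hasDerivAt_id t).div_const (2 : ℂ)
  have key2 := (((((H4.sub A).sub B).add C).add D).add E).neg
  have key3 := (H3.add ((H1.const_mul 2).mul H2)).neg
  have key4 := (H2.add (H1.pow 2)).neg
  refine ⟨?_, ?_, ?_, ?_⟩
  · refine (H1.neg).congr_deriv ?_
    ring
  · refine (key2).congr_deriv ?_
    rw [hode t ht]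
    push_cast [Pi.pow_apply]
    ring
  · refine (key3).congr_deriv ?_
    push_cast [Pi.pow_apply]
    ring
  · refine (key4).congr_deriv ?_
    push_cast [Pi.pow_apply]
    ring
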